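/- If G is a connected star graph with |V(G)| ≥ 3, then every edge of G is contained in at least one triangle. -/

import Mathlib

open SimpleGraph

/-- An induced star of `H` with center `v` and leaf set `L`: `L` is a nonempty
independent set of neighbors of `v`. -/
def IsStar {V : Type*} (H : SimpleGraph V) (v : V) (L : Set V) : Prop :=
  L.Nonempty ∧ (∀ u ∈ L, H.Adj v u) ∧ ∀ u ∈ L, ∀ w ∈ L, ¬ H.Adj u w

/-- `S` is the vertex set of an induced star of `H`. -/
def IsStarSet {V : Type*} (H : SimpleGraph V) (S : Set V) : Prop :=
  ∃ v L, IsStar H v L ∧ S = insert v L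

/-- `S` is the vertex set of a maximal induced star of `H`. -/
def IsMaxStarSet {V : Type*} (H : SimpleGraph V) (S : Set V) : Prop :=
  IsStarSet H S ∧ ∀ T, IsStarSet H T → S ⊆ T → S = T

/-- The set of (vertex sets of) maximal induced stars of `H`. -/
def maxStars {V : Type*} (H : SimpleGraph V) : Set (Set V) := {S | IsMaxStarSet H S}

/-- The star graph of `H`: the intersection graph of the maximal induced stars of `H`. -/
def starGraph {V : Type*} (H : SimpleGraph V) : SimpleGraph ↥(maxStars H) :=
  SimpleGraph.fromRel fun S T => ((S : Set V) ∩ (T : Set V)).Nonempty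
section Helpers
variable {V : Type*} [Fintype V] {H : SimpleGraph V}

lemma starSet_pair {a b : V} (h : H.Adj a b) : IsStarSet H {a, b} := by
  refine ⟨a, {b}, ⟨⟨b, rfl⟩, ?_, ?_⟩, rfl⟩
  · rintro u rfl; exact h
  · rintro u rfl w rfl; exact H.irrefl

lemma starSet_triple {a b c : V} (hab : H.Adj a b) (hac : H.Adj a c) (hbc : ¬ H.Adj b c) :
    IsStarSet H {a, b, c} := by
  refine ⟨a, {b, c}, ⟨⟨b, Or.inl rfl⟩, ?_, ?_⟩, rfl⟩
  · rintro u (rfl | rfl)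
    · exact hab
    · exact hac
  · rintro u (rfl | rfl) w (rfl | rfl)
    · exact H.irrefl
    · exact hbc
    · exact fun h => hbc h.symm
    · exact H.irrefl

lemma exists_max_ext (A : Set V) (hA : IsStarSet H A) :
    ∃ C, IsMaxStarSet H C ∧ A ⊆ C := by
  classical
  have hfin : {T : Set V | IsStarSet H T ∧ A ⊆ T}.Finite := Set.toFinite _
  obtain ⟨C, hC, hmax⟩ := Set.Finite.exists_maximalFor Set.ncard _ hfin ⟨A, hA, subset_rfl⟩
  refine ⟨C, ⟨hC.1, ?_⟩, hC.2⟩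
  intro T' hT' hsub
  have hT'mem : T' ∈ {T : Set V | IsStarSet H T ∧ A ⊆ T} := ⟨hT', hC.2.trans hsub⟩
  have hle : C.ncard ≤ T'.ncard := Set.ncard_le_ncard hsub (Set.toFinite _)
  have := hmax (j := T') hT'mem hle
  exact Set.eq_of_subset_of_ncard_le hsub this.ge (Set.toFinite _)

lemma extend_helper {S T A : Set V} (hA : IsStarSet H A) {p q x y : V}
    (hp : p ∈ A) (hpS : p ∈ S) (hq : q ∈ A) (hqT : q ∈ T)
    (hx : x ∈ A) (hxS : x ∉ S) (hy : y ∈ A) (hyT : y ∉ T) :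
    ∃ C, IsMaxStarSet H C ∧ C ≠ S ∧ C ≠ T ∧ (C ∩ S).Nonempty ∧ (C ∩ T).Nonempty := by
  obtain ⟨C, hC, hsub⟩ := exists_max_ext A hA
  exact ⟨C, hC, fun h => hxS (h ▸ hsub hx), fun h => hyT (h ▸ hsub hy),
    ⟨p, hsub hp, hpS⟩, ⟨q, hsub hq, hqT⟩⟩

lemma max_extend_leaf {v : V} {L : Set V} (hmax : IsMaxStarSet H (insert v L))
    (hstar : IsStar H v L) {u : V} (hadj : H.Adj v u) (hu : u ∉ insert v L) :
    ∃ l ∈ L, H.Adj u l := by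
  by_contra hcon
  push_neg at hcon
  have hstar' : IsStarSet H (insert v (insert u L)) := by
    refine ⟨v, insert u L, ⟨⟨u, Set.mem_insert _ _⟩, ?_, ?_⟩, rfl⟩
    · rintro a (rfl | ha)
      · exact hadj
      · exact hstar.2.1 a ha
    · rintro a (rfl | ha) b (rfl | hb)
      · exact H.irrefl
      · exact hcon b hb
      · exact fun h => hcon a ha h.symm
      · exact hstar.2.2 a ha b hb
  have heq := hmax.2 _ hstar' (Set.insert_subset_insert (Set.subset_insert _ _))
  exact hu (heq ▸ Set.mem_insert_of_mem v (Set.mem_insert u L))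

end Helpers

section Key
variable {V : Type*} [Fintype V] {H : SimpleGraph V}

lemma key {S T R : Set V} (hS : IsMaxStarSet H S) (hT : IsMaxStarSet H T)
    {v w : V} {L M : Set V} (hSs : IsStar H v L) (hTs : IsStar H w M)
    (hSe : S = insert v L) (hTe : T = insert w M)
    (hvM : v ∈ M) (hwL : w ∈ L)
    (hR : IsMaxStarSet H R) (hRS : R ≠ S) (hRT : R ≠ T)
    (hint : (R ∩ S).Nonempty) :
    ∃ C, IsMaxStarSet H C ∧ C ≠ S ∧ C ≠ T ∧ (C ∩ S).Nonempty ∧ (C ∩ T).Nonempty := by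
  have hvS : v ∈ S := hSe ▸ Set.mem_insert _ _
  have hvT : v ∈ T := hTe ▸ Set.mem_insert_of_mem _ hvM
  have hwS : w ∈ S := hSe ▸ Set.mem_insert_of_mem _ hwL
  have hwT : w ∈ T := hTe ▸ Set.mem_insert _ _
  by_cases hvR : v ∈ R
  · exact ⟨R, hR, hRS, hRT, ⟨v, hvR, hvS⟩, ⟨v, hvR, hvT⟩⟩
  by_cases hwR : w ∈ R
  · exact ⟨R, hR, hRS, hRT, ⟨w, hwR, hwS⟩, ⟨w, hwR, hwT⟩⟩
  obtain ⟨s, hsR, hsS⟩ := hint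
  have hsv : s ≠ v := fun h => hvR (h ▸ hsR)
  have hsw : s ≠ w := fun h => hwR (h ▸ hsR)
  have hsL : s ∈ L := by
    rw [hSe] at hsS
    rcases hsS with h | h
    · exact absurd h hsv
    · exact h
  have hadj_vs : H.Adj v s := hSs.2.1 s hsL
  have hnsw : ¬ H.Adj s w := hSs.2.2 s hsL w hwL
  have hsT : s ∉ T := by
    rw [hTe]
    rintro (rfl | hsM)
    · exact hsw rfl
    · exact hTs.2.2 v hvM s hsM hadj_vs
  obtain ⟨c, N, hRs, hRe⟩ := hR.1
  have hcR : c ∈ R := hRe ▸ Set.mem_insert _ _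
  rcases (hRe ▸ hsR : s ∈ insert c N) with hsc | hsN
  · -- s is the center of R
    subst hsc
    have hvR' : v ∉ insert s N := hRe ▸ hvR
    obtain ⟨n, hnN, hadj_vn⟩ := max_extend_leaf (hRe ▸ hR) hRs hadj_vs.symm hvR'
    have hadj_sn : H.Adj s n := hRs.2.1 n hnN
    have hnS : n ∉ S := by
      rw [hSe]
      rintro (rfl | hnL)
      · exact H.irrefl hadj_vn
      · exact hSs.2.2 s hsL n hnL hadj_sn
    have hnT : n ∉ T := by
      rw [hTe]
      rintro (rfl | hnM)
      · exact hnsw hadj_sn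
      · exact hTs.2.2 v hvM n hnM hadj_vn
    exact extend_helper (starSet_pair hadj_vn) (Set.mem_insert _ _) hvS
      (Set.mem_insert _ _) hvT (Set.mem_insert_of_mem _ rfl) hnS
      (Set.mem_insert_of_mem _ rfl) hnT
  · -- s is a leaf of R, center c
    have hcv : c ≠ v := fun h => hvR (h ▸ hcR)
    have hadj_cs : H.Adj c s := hRs.2.1 s hsN
    by_cases hcM : c ∈ M
    · exact ⟨R, hR, hRS, hRT, ⟨s, hsR, hsS⟩, ⟨c, hcR, hTe ▸ Set.mem_insert_of_mem _ hcM⟩⟩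
    · have hcT : c ∉ T := by
        rw [hTe]
        rintro (rfl | h)
        · exact hnsw hadj_cs.symm
        · exact hcM h
      have hcS : c ∉ S := by
        rw [hSe]
        rintro (rfl | hcL)
        · exact hcv rfl
        · exact hSs.2.2 c hcL s hsL hadj_cs
      by_cases hadj_cv : H.Adj c v
      · exact extend_helper (starSet_pair hadj_cv) (Set.mem_insert_of_mem _ rfl) hvS
          (Set.mem_insert_of_mem _ rfl) hvT (Set.mem_insert _ _) hcS
          (Set.mem_insert _ _) hcT
      · -- star {s, c, v} with center s
        have : IsStarSet H {s, c, v} := starSet_triple hadj_cs.symm hadj_vs.symm hadj_cv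
        exact extend_helper this (by right; right; rfl) hvS (by right; right; rfl) hvT
          (by right; left; rfl) hcS (by right; left; rfl) hcT

end Key

section Crux
variable {V : Type*} [Fintype V] {H : SimpleGraph V}

lemma crux {S T : Set V} (hS : IsMaxStarSet H S) (hT : IsMaxStarSet H T)
    (hST : S ≠ T) (hint : (S ∩ T).Nonempty)
    (hthird : ∃ R, IsMaxStarSet H R ∧ R ≠ S ∧ R ≠ T ∧ ((R ∩ S).Nonempty ∨ (R ∩ T).Nonempty)) :
    ∃ C, IsMaxStarSet H C ∧ C ≠ S ∧ C ≠ T ∧ (C ∩ S).Nonempty ∧ (C ∩ T).Nonempty := by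
  obtain ⟨v, L, hSs, hSe⟩ := hS.1
  obtain ⟨w, M, hTs, hTe⟩ := hT.1
  have hvS : v ∈ S := hSe ▸ Set.mem_insert _ _
  have hwT : w ∈ T := hTe ▸ Set.mem_insert _ _
  by_cases hvw : v = w
  · -- Case A: same center
    subst hvw
    have hLM : ¬ L ⊆ M := fun h =>
      hST (hS.2 T hT.1 (by rw [hSe, hTe]; exact Set.insert_subset_insert h))
    obtain ⟨l, hlL, hlM⟩ := Set.not_subset.1 hLM
    have hadj_vl : H.Adj v l := hSs.2.1 l hlL
    have hlT : l ∉ insert v M := by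
      rintro (rfl | h)
      · exact H.irrefl hadj_vl
      · exact hlM h
    obtain ⟨m, hmM, hml⟩ := max_extend_leaf (hTe ▸ hT) hTs hadj_vl hlT
    have hmS : m ∉ S := by
      rw [hSe]
      rintro (rfl | hmL)
      · exact H.irrefl (hTs.2.1 m hmM)
      · exact hSs.2.2 l hlL m hmL hml
    exact extend_helper (starSet_pair hml) (Set.mem_insert _ _)
      (hSe ▸ Set.mem_insert_of_mem _ hlL) (Set.mem_insert_of_mem _ rfl)
      (hTe ▸ Set.mem_insert_of_mem _ hmM) (Set.mem_insert_of_mem _ rfl) hmS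
      (Set.mem_insert _ _) (hTe ▸ hlT)
  · by_cases hvM : v ∈ M
    · by_cases hwL : w ∈ L
      · -- B1
        obtain ⟨R, hR, hRS, hRT, hRint⟩ := hthird
        rcases hRint with h | h
        · exact key hS hT hSs hTs hSe hTe hvM hwL hR hRS hRT h
        · obtain ⟨C, hC, h1, h2, h3, h4⟩ :=
            key hT hS hTs hSs hTe hSe hwL hvM hR hRT hRS h
          exact ⟨C, hC, h2, h1, h4, h3⟩
      · -- B2: v ∈ M, w ∉ L
        have hadj_wv : H.Adj w v := hTs.2.1 v hvM
        have hwS : w ∉ insert v L := by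
          rintro (rfl | h)
          · exact hvw rfl
          · exact hwL h
        obtain ⟨l, hlL, hwl⟩ := max_extend_leaf (hSe ▸ hS) hSs hadj_wv.symm (hSe ▸ (hSe ▸ hwS))
        have hlT : l ∉ T := by
          rw [hTe]
          rintro (rfl | hlM)
          · exact H.irrefl hwl
          · exact hTs.2.2 v hvM l hlM (hSs.2.1 l hlL)
        exact extend_helper (starSet_pair hwl) (Set.mem_insert_of_mem _ rfl)
          (hSe ▸ Set.mem_insert_of_mem _ hlL) (Set.mem_insert _ _) hwT
          (Set.mem_insert _ _) (hSe ▸ hwS) (Set.mem_insert_of_mem _ rfl) hlT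
    · by_cases hwL : w ∈ L
      · -- B2': w ∈ L, v ∉ M
        have hadj_vw : H.Adj v w := hSs.2.1 w hwL
        have hvT : v ∉ insert w M := by
          rintro (rfl | h)
          · exact hvw rfl
          · exact hvM h
        obtain ⟨m, hmM, hvm⟩ := max_extend_leaf (hTe ▸ hT) hTs hadj_vw.symm (hTe ▸ (hTe ▸ hvT))
        have hmS : m ∉ S := by
          rw [hSe]
          rintro (rfl | hmL)
          · exact H.irrefl hvm
          · exact hSs.2.2 w hwL m hmL (hTs.2.1 m hmM)
        exact extend_helper (starSet_pair hvm) (Set.mem_insert _ _) hvS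
          (Set.mem_insert_of_mem _ rfl) (hTe ▸ Set.mem_insert_of_mem _ hmM)
          (Set.mem_insert_of_mem _ rfl) hmS (Set.mem_insert _ _) (hTe ▸ hvT)
      · -- B3: v ∉ T, w ∉ S
        have hvT : v ∉ T := by
          rw [hTe]
          rintro (rfl | h)
          · exact hvw rfl
          · exact hvM h
        have hwS : w ∉ S := by
          rw [hSe]
          rintro (rfl | h)
          · exact hvw rfl
          · exact hwL h
        obtain ⟨x, hxS, hxT⟩ := hint
        have hxv : x ≠ v := fun h => hvT (h ▸ hxT)
        have hxw : x ≠ w := fun h => hwS (h ▸ hxS)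
        have hxL : x ∈ L := by
          rw [hSe] at hxS
          rcases hxS with h | h
          · exact absurd h hxv
          · exact h
        have hxM : x ∈ M := by
          rw [hTe] at hxT
          rcases hxT with h | h
          · exact absurd h hxw
          · exact h
        by_cases hadj : H.Adj v w
        · exact extend_helper (starSet_pair hadj) (Set.mem_insert _ _) hvS
            (Set.mem_insert_of_mem _ rfl) hwT (Set.mem_insert_of_mem _ rfl) hwS
            (Set.mem_insert _ _) hvT
        · have hst : IsStarSet H {x, v, w} :=
            starSet_triple (hSs.2.1 x hxL).symm (hTs.2.1 x hxM).symm hadj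
          exact extend_helper hst (by right; left; rfl) hvS (by right; right; rfl) hwT
            (by right; right; rfl) hwS (by right; left; rfl) hvT

lemma exists_boundary {α : Type*} {G : SimpleGraph α} {b : α} :
    ∀ {r a : α}, G.Walk r a → r ≠ a → r ≠ b →
      ∃ p q : α, p ≠ a ∧ p ≠ b ∧ (q = a ∨ q = b) ∧ G.Adj p q := by
  intro r a wk
  induction wk with
  | nil => intro h _; exact absurd rfl h
  | @cons u c d h wk2 ih =>
    intro hra hrb
    by_cases hc : c = d ∨ c = b
    · exact ⟨u, c, hra, hrb, hc, h⟩
    · push_neg at hc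
      exact ih hc.1 hc.2

end Crux

/-- Every edge of a connected star graph on at least three vertices lies in a triangle. -/
theorem stmt7 {V : Type*} [Fintype V] (H : SimpleGraph V)
    (hconn : (_root_.starGraph H).Connected) (h3 : 3 ≤ (maxStars H).ncard) :
    ∀ a b : ↥(maxStars H), (_root_.starGraph H).Adj a b →
      ∃ c : ↥(maxStars H), (_root_.starGraph H).Adj a c ∧ (_root_.starGraph H).Adj b c := by
  intro a b hab
  unfold _root_.starGraph at hab
  rw [SimpleGraph.fromRel_adj] at hab
  obtain ⟨hne, hor⟩ := hab
  have hint : ((a : Set V) ∩ (b : Set V)).Nonempty := by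
    rcases hor with h | h
    · exact h
    · rwa [Set.inter_comm]
  have hST : (a : Set V) ≠ (b : Set V) := fun h => hne (Subtype.ext h)
  have haM : IsMaxStarSet H (a : Set V) := a.2
  have hbM : IsMaxStarSet H (b : Set V) := b.2
  -- a third maximal star exists
  have hex : ∃ R ∈ maxStars H, R ≠ (a : Set V) ∧ R ≠ (b : Set V) := by
    by_contra hcon
    push_neg at hcon
    have hsub : maxStars H ⊆ {(a : Set V), (b : Set V)} := by
      intro R hR
      by_cases h : R = (a : Set V)
      · exact Or.inl h
      · exact Or.inr (hcon R hR h)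
    have h1 := Set.ncard_le_ncard hsub (Set.toFinite _)
    have h2 : ({(a : Set V), (b : Set V)} : Set (Set V)).ncard ≤ 2 := by
      refine le_trans (Set.ncard_insert_le _ _) ?_
      simp [Set.ncard_singleton]
    omega
  obtain ⟨R, hRmem, hRa, hRb⟩ := hex
  have hra : (⟨R, hRmem⟩ : ↥(maxStars H)) ≠ a := fun h => hRa (congrArg Subtype.val h)
  have hrb : (⟨R, hRmem⟩ : ↥(maxStars H)) ≠ b := fun h => hRb (congrArg Subtype.val h)
  obtain ⟨p, q, hpa, hpb, hq, hpq⟩ :=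
    exists_boundary ((hconn.preconnected ⟨R, hRmem⟩ a).some) hra hrb
  unfold _root_.starGraph at hpq
  rw [SimpleGraph.fromRel_adj] at hpq
  have hpqint : ((p : Set V) ∩ (q : Set V)).Nonempty := by
    rcases hpq.2 with h | h
    · exact h
    · rwa [Set.inter_comm]
  have hthird : ∃ R', IsMaxStarSet H R' ∧ R' ≠ (a : Set V) ∧ R' ≠ (b : Set V) ∧
      (((R' : Set V) ∩ (a : Set V)).Nonempty ∨ ((R' : Set V) ∩ (b : Set V)).Nonempty) := by
    refine ⟨(p : Set V), p.2, fun h => hpa (Subtype.ext h), fun h => hpb (Subtype.ext h), ?_⟩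
    rcases hq with rfl | rfl
    · exact Or.inl hpqint
    · exact Or.inr hpqint
  obtain ⟨C, hC, hCa, hCb, hCaint, hCbint⟩ := crux haM hbM hST hint hthird
  refine ⟨⟨C, hC⟩, ?_, ?_⟩
  · unfold _root_.starGraph
    rw [SimpleGraph.fromRel_adj]
    exact ⟨fun h => hCa (congrArg Subtype.val h).symm, Or.inl (by rwa [Set.inter_comm] at hCaint)⟩
  · unfold _root_.starGraph
    rw [SimpleGraph.fromRel_adj]
    exact ⟨fun h => hCb (congrArg Subtype.val h).symm, Or.inl (by rwa [Set.inter_comm] at hCbint)⟩
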